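/- Define q_l = 1/(1+e^{2^{l-η}}) and p_l ∈ [0, 1/2] arbitrary, and carries c_l recursively by c_{l₀} = 0 at the lowest level l₀ and c_{l+1} = p_l(c_l + q_l - 2 q_l c_l) + q_l c_l. Then for every l > η (with l > l₀), c_l < 2^{η - l + 1} - 2/(1 + e^{2^{l-η}}). -/

import Mathlib

private lemma exp_pow_eq (u : ℝ) (n : ℕ) (hn : (n:ℝ) ≠ 0) : (Real.exp (u/n))^n = Real.exp u := by
  rw [← Real.exp_nat_mul]; congr 1; field_simp

private lemma exp_sq_lb {u : ℝ} (hu : 0 ≤ u) : (1 + u/2)^2 ≤ Real.exp u := by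
  have h : u/2 + 1 ≤ Real.exp (u/2) := Real.add_one_le_exp _
  have h0 : (0:ℝ) ≤ 1 + u/2 := by linarith
  calc (1+u/2)^2 ≤ (Real.exp (u/2))^2 := by
        apply pow_le_pow_left₀ h0; linarith
    _ = Real.exp u := exp_pow_eq u 2 (by norm_num)

private lemma qmono {a b : ℝ} (h : a ≤ b) :
    1/(1 + Real.exp b) ≤ 1/(1 + Real.exp a) := by
  apply one_div_le_one_div_of_le (by positivity)
  have := Real.exp_le_exp.mpr h; linarith

private lemma ineq_base {u : ℝ} (h1 : 1 < u) (h2 : u ≤ 2) :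
    1/2 < 2/u - 2/(1 + Real.exp u) := by
  have ht : (1 + u/2)^2 ≤ Real.exp u := exp_sq_lb (by linarith)
  have hE : (0:ℝ) < 1 + Real.exp u := by positivity
  have hu : (0:ℝ) < u := by linarith
  rw [lt_sub_iff_add_lt, div_add_div _ _ (by norm_num) hE.ne', div_lt_div_iff₀ (by positivity) hu]
  nlinarith [Real.exp_pos u]

private lemma ineq_step_small {u : ℝ} (h1 : 1 < u) (h2 : u ≤ 2) :
    1/(1 + Real.exp u)/2 + 1/4 + 2/(1 + Real.exp (2*u)) < 1/u := by
  have he1 : (2.7182818283:ℝ) < Real.exp 1 := Real.exp_one_gt_d9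
  have he2 : (7.38:ℝ) < Real.exp 2 := by
    have h3 : Real.exp 2 = Real.exp 1 * Real.exp 1 := by rw [← Real.exp_add]; norm_num
    nlinarith
  have he3 : (20:ℝ) < Real.exp 3 := by
    have h3 : Real.exp 3 = Real.exp 1 * Real.exp 1 * Real.exp 1 := by
      rw [← Real.exp_add, ← Real.exp_add]; norm_num
    nlinarith [Real.exp_pos 1]
  rcases le_or_gt u (3/2) with hc | hc
  · have b1 : 1/(1 + Real.exp u) ≤ 1/(1 + Real.exp 1) := qmono (le_of_lt h1)
    have b2 : 2/(1 + Real.exp (2*u)) ≤ 2/(1 + Real.exp 2) := by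
      have h := mul_le_mul_of_nonneg_left (qmono (show (2:ℝ) ≤ 2*u by linarith))
        (by norm_num : (0:ℝ) ≤ 2)
      rw [mul_one_div, mul_one_div] at h; exact h
    have b3 : (2:ℝ)/3 ≤ 1/u := by
      rw [div_le_div_iff₀ (by norm_num) (by linarith)]; linarith
    have c1 : 1/(1 + Real.exp 1) < 0.269 := by
      rw [div_lt_iff₀ (by positivity)]; nlinarith
    have c2 : 2/(1 + Real.exp 2) < 0.239 := by
      rw [div_lt_iff₀ (by positivity)]; nlinarith
    linarith
  · have hq32 : (3:ℝ) < Real.exp (3/2) := by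
      nlinarith [exp_sq_lb (show (0:ℝ) ≤ 3/2 by norm_num)]
    have b1 : 1/(1 + Real.exp u) ≤ 1/(1 + Real.exp (3/2)) := qmono (le_of_lt hc)
    have b2 : 2/(1 + Real.exp (2*u)) ≤ 2/(1 + Real.exp 3) := by
      have h := mul_le_mul_of_nonneg_left (qmono (show (3:ℝ) ≤ 2*u by linarith))
        (by norm_num : (0:ℝ) ≤ 2)
      rw [mul_one_div, mul_one_div] at h; exact h
    have b3 : (1:ℝ)/2 ≤ 1/u := by
      rw [div_le_div_iff₀ (by norm_num) (by linarith)]; linarith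
    have c1 : 1/(1 + Real.exp (3/2)) < 0.25 := by
      rw [div_lt_iff₀ (by positivity)]; nlinarith
    have c2 : 2/(1 + Real.exp 3) < 0.096 := by
      rw [div_lt_iff₀ (by positivity)]; nlinarith
    linarith

private lemma ineq_step_big {u : ℝ} (h : 2 ≤ u) :
    4*(1 + Real.exp u) ≤ 1 + Real.exp (2*u) := by
  have hsq : Real.exp (2*u) = (Real.exp u)^2 := by rw [two_mul, Real.exp_add, sq]
  have he1 : (2.7182818283:ℝ) < Real.exp 1 := Real.exp_one_gt_d9
  have h2 : Real.exp 2 ≤ Real.exp u := Real.exp_le_exp.mpr h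
  have he2 : (7.38:ℝ) < Real.exp 2 := by
    have h3 : Real.exp 2 = Real.exp 1 * Real.exp 1 := by rw [← Real.exp_add]; norm_num
    nlinarith
  nlinarith [Real.exp_pos u, sq_nonneg (Real.exp u - 7)]

private lemma ineq_base_b {y : ℝ} (h1 : 1 < y) :
    1/(1 + Real.exp y)/2 + 2/(1 + Real.exp (2*y)) < 1/y := by
  have hy : (0:ℝ) < y := by linarith
  have hE : (0:ℝ) < 1 + Real.exp y := by positivity
  have hE2 : (0:ℝ) < 1 + Real.exp (2*y) := by positivity
  have he : (2.7182818283 : ℝ) < Real.exp 1 := Real.exp_one_gt_d9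
  have hey : 2.7 * y ≤ Real.exp y := by
    have h0 : y ≤ Real.exp (y-1) := by linarith [Real.add_one_le_exp (y - 1)]
    have h1' : Real.exp y = Real.exp 1 * Real.exp (y-1) := by
      rw [← Real.exp_add]; ring_nf
    nlinarith [Real.exp_pos (y-1)]
  have hsq : Real.exp (2*y) = (Real.exp y)^2 := by rw [two_mul, Real.exp_add, sq]
  rw [div_div, div_add_div _ _ (by positivity) hE2.ne', div_lt_div_iff₀ (by positivity) hy, hsq]
  nlinarith [Real.exp_pos y,
    mul_le_mul_of_nonneg_right hey (show (0:ℝ) ≤ (Real.exp y)^2 + 4*Real.exp y + 5 by positivity)]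

theorem stmt_8 (η : ℝ) (l₀ : ℤ) (p q c : ℤ → ℝ)
    (hq : ∀ l, q l = 1 / (1 + Real.exp ((2 : ℝ) ^ ((l : ℝ) - η))))
    (hp0 : ∀ l, 0 ≤ p l) (hp : ∀ l, p l ≤ 1 / 2)
    (hc0 : c l₀ = 0)
    (hrec : ∀ l : ℤ, l₀ ≤ l →
      c (l + 1) = p l * (c l + q l - 2 * q l * c l) + q l * c l) :
    ∀ l : ℤ, l₀ < l → (l : ℝ) > η →
      c l < (2 : ℝ) ^ (η - (l : ℝ) + 1) - 2 / (1 + Real.exp ((2 : ℝ) ^ ((l : ℝ) - η))) := by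
  -- basic facts about q
  have hqpos : ∀ l : ℤ, 0 < q l := by
    intro l; rw [hq l]; positivity
  have hqhalf : ∀ l : ℤ, q l < 1/2 := by
    intro l; rw [hq l]
    have hx : (0:ℝ) < (2:ℝ) ^ ((l:ℝ) - η) := Real.rpow_pos_of_pos (by norm_num) _
    have h1 : (1:ℝ) < Real.exp ((2:ℝ) ^ ((l:ℝ) - η)) := by
      nlinarith [Real.add_one_le_exp ((2:ℝ) ^ ((l:ℝ) - η))]
    have h2 : (2:ℝ) < 1 + Real.exp ((2:ℝ) ^ ((l:ℝ) - η)) := by linarith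
    exact one_div_lt_one_div_of_lt (by norm_num) h2
  -- global bounds on c
  have hglob : ∀ l : ℤ, l₀ ≤ l → 0 ≤ c l ∧ c l < 1/2 := by
    intro l hl
    refine Int.le_induction (motive := fun l _ => 0 ≤ c l ∧ c l < 1/2) ?_ ?_ l hl
    · show 0 ≤ c l₀ ∧ c l₀ < 1/2
      rw [hc0]; norm_num
    · intro n hn ih
      show 0 ≤ c (n+1) ∧ c (n+1) < 1/2
      obtain ⟨h0, h1⟩ := ih
      have hr := hrec n hn
      have hq1 := hqpos n; have hq2 := hqhalf n
      have hp1 := hp0 n; have hp2 := hp n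
      have hcoef : 0 < p n * (1 - 2*q n) + q n := by
        nlinarith [mul_nonneg hp1 (show (0:ℝ) ≤ 1 - 2*q n by linarith)]
      have hkey : c n * (p n * (1-2*q n) + q n) < (1/2) * (p n * (1-2*q n) + q n) :=
        mul_lt_mul_of_pos_right h1 hcoef
      constructor
      · rw [hr]
        nlinarith [mul_nonneg hp1 h0, mul_nonneg hp1 hq1.le, mul_nonneg hq1.le h0,
          mul_nonneg (mul_nonneg (show (0:ℝ) ≤ 1 - 2*p n by linarith) hq1.le) h0]
      · rw [hr]; nlinarith [hkey]
  -- half-step bound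
  have hhalf : ∀ n : ℤ, l₀ ≤ n → c (n+1) ≤ q n / 2 + c n / 2 := by
    intro n hn
    have hr := hrec n hn
    have h0 := (hglob n hn).1
    have hq1 := hqpos n; have hq2 := hqhalf n
    have hp1 := hp0 n; have hp2 := hp n
    have hpos2 : (0:ℝ) ≤ q n + c n * (1 - 2*q n) := by nlinarith
    rw [hr]
    nlinarith [mul_nonneg (show (0:ℝ) ≤ 1/2 - p n by linarith) hpos2]
  -- rpow facts
  have F1 : ∀ l : ℤ, (2:ℝ)^((((l+1):ℤ):ℝ) - η) = 2 * (2:ℝ)^((l:ℝ)-η) := by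
    intro l
    push_cast
    rw [show ((l:ℝ)+1) - η = ((l:ℝ)-η) + 1 by ring,
      Real.rpow_add_one (by norm_num : (2:ℝ) ≠ 0)]
    ring
  have F2 : ∀ l : ℤ, (2:ℝ)^(η - (l:ℝ) + 1) = 2 / (2:ℝ)^((l:ℝ)-η) := by
    intro l
    rw [show η - (l:ℝ) + 1 = -((l:ℝ)-η) + 1 by ring,
      Real.rpow_add (by norm_num : (0:ℝ) < 2), Real.rpow_one,
      Real.rpow_neg (by norm_num : (0:ℝ) ≤ 2), inv_mul_eq_div]
  have Fpos : ∀ l : ℤ, (0:ℝ) < (2:ℝ)^((l:ℝ)-η) :=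
    fun l => Real.rpow_pos_of_pos (by norm_num) _
  have Fgt1 : ∀ l : ℤ, η < (l:ℝ) → 1 < (2:ℝ)^((l:ℝ)-η) := by
    intro l hl
    have : (2:ℝ)^(0:ℝ) < (2:ℝ)^((l:ℝ)-η) := by
      apply Real.rpow_lt_rpow_left_iff (by norm_num : (1:ℝ) < 2) |>.mpr
      linarith
    rwa [Real.rpow_zero] at this
  -- the invariant level
  set m₀ := max (⌊η⌋ + 1) (l₀ + 1) with hm₀
  have hm₀l₀ : l₀ + 1 ≤ m₀ := le_max_right _ _
  have hm₀η : ∀ l : ℤ, m₀ ≤ l → η < (l:ℝ) := by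
    intro l hl
    have h1 : ⌊η⌋ + 1 ≤ l := le_trans (le_max_left _ _) hl
    have := Int.lt_floor_add_one η
    have h2 : ((⌊η⌋:ℤ):ℝ) + 1 ≤ (l:ℝ) := by exact_mod_cast h1
    linarith
  -- main invariant
  have key : ∀ l : ℤ, m₀ ≤ l → c l < 2/(2:ℝ)^((l:ℝ)-η) - 2 * q l := by
    intro l hl
    refine Int.le_induction
      (motive := fun l _ => c l < 2/(2:ℝ)^((l:ℝ)-η) - 2 * q l) ?_ ?_ l hl
    · show c m₀ < 2/(2:ℝ)^(((m₀:ℤ):ℝ)-η) - 2 * q m₀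
      by_cases hAB : l₀ + 1 ≤ ⌊η⌋ + 1
      · -- m₀ = ⌊η⌋+1, first level above η
        have hmval : m₀ = ⌊η⌋ + 1 := max_eq_left hAB
        have hu1 : 1 < (2:ℝ)^(((m₀:ℤ):ℝ)-η) := Fgt1 m₀ (hm₀η m₀ le_rfl)
        have hu2 : (2:ℝ)^(((m₀:ℤ):ℝ)-η) ≤ 2 := by
          have hfl : ((m₀:ℤ):ℝ) ≤ η + 1 := by
            rw [hmval]; push_cast
            linarith [Int.floor_le η]
          calc (2:ℝ)^(((m₀:ℤ):ℝ)-η) ≤ (2:ℝ)^(1:ℝ) := by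
                apply Real.rpow_le_rpow_of_exponent_le (by norm_num)
                linarith
            _ = 2 := Real.rpow_one 2
        have hc : c m₀ < 1/2 := (hglob m₀ (by omega)).2
        have hb := ineq_base hu1 hu2
        rw [hq m₀]
        have h2q : 2 * (1 / (1 + Real.exp ((2:ℝ)^(((m₀:ℤ):ℝ)-η)))) =
            2 / (1 + Real.exp ((2:ℝ)^(((m₀:ℤ):ℝ)-η))) := by rw [mul_one_div]
        linarith [h2q.le]
      · -- m₀ = l₀ + 1, base from c l₀ = 0
        have hfl : ⌊η⌋ + 1 ≤ l₀ := by omega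
        have hmval : m₀ = l₀ + 1 := max_eq_right (by omega)
        have hηl₀ : η < (l₀:ℝ) := by
          have := Int.lt_floor_add_one η
          have h2 : ((⌊η⌋:ℤ):ℝ) + 1 ≤ (l₀:ℝ) := by exact_mod_cast hfl
          linarith
        have hy1 : 1 < (2:ℝ)^((l₀:ℝ)-η) := Fgt1 l₀ hηl₀
        have hyp := Fpos l₀
        have hcval : c (l₀ + 1) = p l₀ * q l₀ := by
          rw [hrec l₀ le_rfl, hc0]; ring
        have hpq : p l₀ * q l₀ ≤ q l₀ / 2 := by
          nlinarith [hqpos l₀, hp l₀, hp0 l₀]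
        have hbb := ineq_base_b hy1
        -- rewrite the goal at level l₀+1
        rw [hmval, hcval, F1 l₀, hq (l₀+1), F1 l₀]
        have hql₀ : q l₀ = 1/(1 + Real.exp ((2:ℝ)^((l₀:ℝ)-η))) := hq l₀
        have hdiv : 2 / (2 * (2:ℝ)^((l₀:ℝ)-η)) = 1 / (2:ℝ)^((l₀:ℝ)-η) := by
          field_simp
        rw [hdiv]
        have h2q : 2 * (1 / (1 + Real.exp (2 * (2:ℝ)^((l₀:ℝ)-η)))) =
            2 / (1 + Real.exp (2 * (2:ℝ)^((l₀:ℝ)-η))) := by rw [mul_one_div]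
        rw [h2q, hql₀]
        rw [hql₀] at hpq
        linarith [hbb]
    · intro n hn ih
      show c (n+1) < 2/(2:ℝ)^(((n+1:ℤ):ℝ)-η) - 2 * q (n+1)
      have hl₀n : l₀ ≤ n := by omega
      have hu1 : 1 < (2:ℝ)^((n:ℝ)-η) := Fgt1 n (hm₀η n hn)
      have hupos := Fpos n
      have hstep := hhalf n hl₀n
      have hqn : q n = 1/(1 + Real.exp ((2:ℝ)^((n:ℝ)-η))) := hq n
      have hqn1 : q (n+1) = 1/(1 + Real.exp (2 * (2:ℝ)^((n:ℝ)-η))) := by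
        rw [hq (n+1), F1 n]
      -- goal with F1 rewritten
      rw [F1 n, hqn1]
      have hdiv : 2 / (2 * (2:ℝ)^((n:ℝ)-η)) = 1 / (2:ℝ)^((n:ℝ)-η) := by field_simp
      rw [hdiv]
      have h2q : 2 * (1 / (1 + Real.exp (2 * (2:ℝ)^((n:ℝ)-η)))) =
          2 / (1 + Real.exp (2 * (2:ℝ)^((n:ℝ)-η))) := by rw [mul_one_div]
      rw [h2q]
      by_cases hu2 : (2:ℝ)^((n:ℝ)-η) ≤ 2
      · -- small case: use c n < 1/2
        have hc : c n < 1/2 := (hglob n hl₀n).2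
        have hss := ineq_step_small hu1 hu2
        rw [hqn] at hstep
        linarith
      · -- big case: use the invariant
        push_neg at hu2
        have hsb := ineq_step_big hu2.le
        have hEpos : (0:ℝ) < 1 + Real.exp ((2:ℝ)^((n:ℝ)-η)) := by positivity
        have hE2pos : (0:ℝ) < 1 + Real.exp (2 * (2:ℝ)^((n:ℝ)-η)) := by positivity
        have hqq : 2 / (1 + Real.exp (2 * (2:ℝ)^((n:ℝ)-η))) ≤
            (1/(1 + Real.exp ((2:ℝ)^((n:ℝ)-η))))/2 := by
          rw [div_div, div_le_div_iff₀ hE2pos (by positivity)]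
          linarith
        have hih : c n < 2/(2:ℝ)^((n:ℝ)-η) - 2 * q n := ih
        have hdiv2 : (2/(2:ℝ)^((n:ℝ)-η))/2 = 1/(2:ℝ)^((n:ℝ)-η) := by
          rw [div_div, mul_comm]
          field_simp
        rw [hqn] at hstep hih
        nlinarith [hstep, hih, hqq, hdiv2]
  -- conclude
  intro l hl1 hl2
  have hfl : ⌊η⌋ + 1 ≤ l := by
    have : ⌊η⌋ < l := Int.floor_lt.mpr hl2
    omega
  have hml : m₀ ≤ l := max_le hfl (by omega)
  have hk := key l hml
  rw [F2 l]
  rw [hq l] at hk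
  have h2q : 2 * (1 / (1 + Real.exp ((2:ℝ)^((l:ℝ)-η)))) =
      2 / (1 + Real.exp ((2:ℝ)^((l:ℝ)-η))) := by rw [mul_one_div]
  linarith [h2q.le]
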